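/- Let τ > 0, let K ⊆ ℝⁿ, let f : ℝⁿ × ℝⁿ → ℝⁿ be continuously differentiable in its second argument, let h₀, h₁ : ℝⁿ → ℝ be continuously differentiable, let e₁ : ℝⁿ → ℝⁿ and C ∈ ℝⁿ. Fix t ∈ ℝ and let x : ℝ → ℝⁿ be continuously differentiable on [t−τ, t] with x(θ) ∈ K and |x′(θ)| ≤ C coordinatewise for all θ ∈ [t−τ, t], and with x′(t) = f(x(t), x(t−τ)). Assume that coordinatewise |∇h₁(b)ᵀ − ∇h₀(a)ᵀ·J_y f(a,b)| ≤ e₁(a)ᵀ for all a, b ∈ K. Then the function F(u) := h₀(x(u)) + ∫_{u−τ}^{u} h₁(x(θ)) dθ satisfies F′(t) ≤ ∇h₀(x(t))·f(x(t), x(t)) + τ·e₁(x(t))ᵀC. -/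

import Mathlib

open intervalIntegral

/-- Bound on the time-derivative of the integral-form reach-avoid barrier
functional (derivation of condition (2a) from (6a) in the proof of Theorem 2):
under the coordinatewise bounds `|∇h₁(b)ᵀ - ∇h₀(a)ᵀ·J_y f(a,b)| ≤ e₁(a)ᵀ` on `K`
and `|x'| ≤ C` on `[t-τ, t]`, the function
`F u = h₀(x u) + ∫_{u-τ}^{u} h₁(x θ) dθ` is differentiable at `t` with
`F'(t) ≤ ∇h₀(x t)·f(x t, x t) + τ·e₁(x t)ᵀ C`. -/
theorem stmt_3 {n : ℕ} (τ : ℝ) (hτ : 0 < τ) (K : Set (Fin n → ℝ))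
    (f : (Fin n → ℝ) → (Fin n → ℝ) → (Fin n → ℝ))
    (hf : ∀ a : Fin n → ℝ, ContDiff ℝ 1 (f a))
    (h₀ h₁ : (Fin n → ℝ) → ℝ) (hh₀ : ContDiff ℝ 1 h₀) (hh₁ : ContDiff ℝ 1 h₁)
    (e₁ : (Fin n → ℝ) → (Fin n → ℝ)) (C : Fin n → ℝ)
    (t : ℝ) (x x' : ℝ → (Fin n → ℝ)) (hxc : Continuous x)
    (hx : ∀ θ ∈ Set.Icc (t - τ) t, HasDerivAt x (x' θ) θ)
    (hx'c : ContinuousOn x' (Set.Icc (t - τ) t))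
    (hxK : ∀ θ ∈ Set.Icc (t - τ) t, x θ ∈ K)
    (hx'C : ∀ θ ∈ Set.Icc (t - τ) t, ∀ i, |x' θ i| ≤ C i)
    (hx't : x' t = f (x t) (x (t - τ)))
    (he₁ : ∀ a ∈ K, ∀ b ∈ K, ∀ j,
      |fderiv ℝ h₁ b (Pi.single j 1) -
        fderiv ℝ h₀ a (fderiv ℝ (f a) b (Pi.single j 1))| ≤ e₁ a j) :
    ∃ d : ℝ,
      HasDerivAt (fun u => h₀ (x u) + ∫ θ in (u - τ)..u, h₁ (x θ)) d t ∧
      d ≤ fderiv ℝ h₀ (x t) (f (x t) (x t)) + τ * ∑ i, e₁ (x t) i * C i := by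
  have htmem : t ∈ Set.Icc (t - τ) t := ⟨by linarith, le_rfl⟩
  have hbmem : t - τ ∈ Set.Icc (t - τ) t := ⟨le_rfl, by linarith⟩
  set a := x t with ha
  set b := x (t - τ) with hb
  set A := fderiv ℝ h₀ a with hA
  set M := ∑ i, e₁ a i * C i with hM
  -- the composed integrand
  have hg : Continuous fun θ => h₁ (x θ) := hh₁.continuous.comp hxc
  -- derivative of the integral term
  have hI : ∀ s : ℝ, HasDerivAt (fun u => ∫ θ in (0:ℝ)..u, h₁ (x θ)) (h₁ (x s)) s := by
    intro s
    have hint : IntervalIntegrable (fun θ => h₁ (x θ)) MeasureTheory.volume 0 s :=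
      hg.intervalIntegrable 0 s
    exact intervalIntegral.integral_hasDerivAt_right hint
      (hg.stronglyMeasurableAtFilter MeasureTheory.volume (nhds s)) hg.continuousAt
  have hFeq : (fun u => ∫ θ in (u - τ)..u, h₁ (x θ)) =
      fun u => (∫ θ in (0:ℝ)..u, h₁ (x θ)) - ∫ θ in (0:ℝ)..(u - τ), h₁ (x θ) := by
    funext u
    have := intervalIntegral.integral_add_adjacent_intervals (μ := MeasureTheory.volume)
      (hg.intervalIntegrable 0 (u - τ)) (hg.intervalIntegrable (u - τ) u)
    linarith
  have hd2 : HasDerivAt (fun u => ∫ θ in (u - τ)..u, h₁ (x θ)) (h₁ a - h₁ b) t := by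
    rw [hFeq]
    have h2 : HasDerivAt (fun u : ℝ => ∫ θ in (0:ℝ)..(u - τ), h₁ (x θ)) (h₁ b * 1) t := by
      exact HasDerivAt.comp t (hI (t - τ)) ((hasDerivAt_id t).sub_const τ)
    have h3 := (hI t).sub h2
    rw [mul_one] at h3
    exact h3
  have hd1 : HasDerivAt (fun u => h₀ (x u)) (A (x' t)) t :=
    (hh₀.differentiable one_ne_zero a).hasFDerivAt.comp_hasDerivAt t (hx t htmem)
  refine ⟨A (x' t) + (h₁ a - h₁ b), hd1.add hd2, ?_⟩
  -- auxiliary function φ and its derivative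
  set φ : ℝ → ℝ := fun θ => h₁ (x θ) - A (f a (x θ)) with hφ
  set D : ℝ → ℝ := fun θ =>
    fderiv ℝ h₁ (x θ) (x' θ) - A (fderiv ℝ (f a) (x θ) (x' θ)) with hD
  have hφd : ∀ θ ∈ Set.Icc (t - τ) t, HasDerivAt φ (D θ) θ := by
    intro θ hθ
    have h1 : HasDerivAt (fun u => h₁ (x u)) (fderiv ℝ h₁ (x θ) (x' θ)) θ :=
      (hh₁.differentiable one_ne_zero (x θ)).hasFDerivAt.comp_hasDerivAt θ (hx θ hθ)
    have h2 : HasDerivAt (fun u => f a (x u)) (fderiv ℝ (f a) (x θ) (x' θ)) θ :=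
      ((hf a).differentiable one_ne_zero (x θ)).hasFDerivAt.comp_hasDerivAt θ (hx θ hθ)
    have h3 : HasDerivAt (fun u => A (f a (x u))) (A (fderiv ℝ (f a) (x θ) (x' θ))) θ :=
      A.hasFDerivAt.comp_hasDerivAt θ h2
    exact h1.sub h3
  -- bound on D
  have hC : ∀ i, 0 ≤ C i := fun i => le_trans (abs_nonneg _) (hx'C t htmem i)
  have he0 : ∀ j, 0 ≤ e₁ a j := fun j =>
    le_trans (abs_nonneg _) (he₁ a (hxK t htmem) a (hxK t htmem) j)
  have hDb : ∀ θ ∈ Set.Icc (t - τ) t, ‖D θ‖ ≤ M := by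
    intro θ hθ
    have hxv : x' θ = ∑ j, x' θ j • (Pi.single j (1:ℝ) : Fin n → ℝ) := by
      funext i
      simp [Finset.sum_apply, Pi.single_apply, Finset.sum_ite_eq', mul_comm]
    have hDθ : D θ = ∑ j, x' θ j *
        (fderiv ℝ h₁ (x θ) (Pi.single j 1) - A (fderiv ℝ (f a) (x θ) (Pi.single j 1))) := by
      have e1 : fderiv ℝ h₁ (x θ) (x' θ)
          = ∑ j, x' θ j * fderiv ℝ h₁ (x θ) (Pi.single j 1) := by
        conv_lhs => rw [hxv]
        simp [map_sum, smul_eq_mul]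
      have e2 : A (fderiv ℝ (f a) (x θ) (x' θ))
          = ∑ j, x' θ j * A (fderiv ℝ (f a) (x θ) (Pi.single j 1)) := by
        conv_lhs => rw [hxv]
        simp [map_sum, smul_eq_mul]
      rw [hD]
      simp only
      rw [e1, e2, ← Finset.sum_sub_distrib]
      exact Finset.sum_congr rfl fun j _ => (mul_sub _ _ _).symm
    rw [Real.norm_eq_abs, hDθ]
    calc |∑ j, x' θ j * (fderiv ℝ h₁ (x θ) (Pi.single j 1)
            - A (fderiv ℝ (f a) (x θ) (Pi.single j 1)))|
        ≤ ∑ j, |x' θ j * (fderiv ℝ h₁ (x θ) (Pi.single j 1)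
            - A (fderiv ℝ (f a) (x θ) (Pi.single j 1)))| := Finset.abs_sum_le_sum_abs _ _
      _ ≤ M := by
          rw [hM]
          apply Finset.sum_le_sum
          intro j _
          rw [abs_mul]
          have h1 := hx'C θ hθ j
          have h2 := he₁ a (hxK t htmem) (x θ) (hxK θ hθ) j
          calc |x' θ j| * |fderiv ℝ h₁ (x θ) (Pi.single j 1)
                  - A (fderiv ℝ (f a) (x θ) (Pi.single j 1))|
              ≤ C j * e₁ a j :=
                mul_le_mul h1 h2 (abs_nonneg _) (hC j)
            _ = e₁ a j * C j := mul_comm _ _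
  -- mean value bound
  have hmvt : ‖φ t - φ (t - τ)‖ ≤ M * ‖t - (t - τ)‖ := by
    apply (convex_Icc (t - τ) t).norm_image_sub_le_of_norm_hasDerivWithin_le
      (fun θ hθ => (hφd θ hθ).hasDerivWithinAt) hDb hbmem htmem
  have hnorm : ‖t - (t - τ)‖ = τ := by
    rw [Real.norm_eq_abs]; rw [abs_of_nonneg] <;> linarith
  rw [hnorm, Real.norm_eq_abs] at hmvt
  have hφb : φ t - φ (t - τ) ≤ M * τ := le_trans (le_abs_self _) hmvt
  have hlin : A (f a a) - A (f a b) = (h₁ a - φ t) - (h₁ b - φ (t - τ)) := by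
    simp only [hφ, ← ha, ← hb]
    ring
  rw [hx't]
  have : A (f a b) + (h₁ a - h₁ b) ≤ A (f a a) + τ * M := by
    have := hφb
    nlinarith [hlin]
  simpa [hM] using this
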